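/- Let Q be a graph with minimum degree at least 3, and let H be a dissolution of G (obtained from G by a sequence of dissolutions of degree-2 vertices). If Q is a contraction of G, then Q is a contraction of H. -/
import Mathlib


open SimpleGraph

universe u

/-- A set `S` is a connected set of `G` if the induced subgraph is connected. -/
def ConnSet {V : Type u} (G : SimpleGraph V) (S : Set V) : Prop :=
  (G.induce S).Connected

/-- `σ` witnesses that `H` is a contraction of `G`: `σ` is surjective, every fiber
induces a connected nonempty subgraph, and `H.Adj x y` iff the union of the fibers
of `x` and `y` induces a connected subgraph. -/
def IsContractionMap {V : Type u} {W : Type*} (G : SimpleGraph V) (H : SimpleGraph W)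
    (σ : V → W) : Prop :=
  Function.Surjective σ ∧
  (∀ x : W, ConnSet G (σ ⁻¹' {x})) ∧
  (∀ x y : W, x ≠ y → (H.Adj x y ↔ ConnSet G (σ ⁻¹' {x} ∪ σ ⁻¹' {y})))

/-- `H` is a contraction of `G`. -/
def IsContraction {W : Type*} {V : Type u} (H : SimpleGraph W) (G : SimpleGraph V) : Prop :=
  ∃ σ : V → W, IsContractionMap G H σ

/-- The set `S` has diameter at most `c` in `G` (distances measured in `G[S]`). -/
def DiamLE {V : Type u} (G : SimpleGraph V) (S : Set V) (c : ℕ) : Prop :=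
  ∀ u v : S, (G.induce S).dist u v ≤ c

/-- `H` is a `c`-size contraction of `G`: all fibers have at most `c` vertices. -/
def IsSizeContraction {W : Type*} {V : Type u} (H : SimpleGraph W) (G : SimpleGraph V)
    (c : ℕ) : Prop :=
  ∃ σ : V → W, IsContractionMap G H σ ∧ ∀ x : W, (σ ⁻¹' {x}).ncard ≤ c

/-- `H` is a `c`-diameter contraction of `G`: all fibers have diameter at most `c`. -/
def IsDiamContraction {W : Type*} {V : Type u} (H : SimpleGraph W) (G : SimpleGraph V)
    (c : ℕ) : Prop :=
  ∃ σ : V → W, IsContractionMap G H σ ∧ ∀ x : W, DiamLE G (σ ⁻¹' {x}) c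

/-- `H` is a minor of `G`: `H` is a contraction of a subgraph of `G`. -/
def IsMinor {W : Type*} {V : Type u} (H : SimpleGraph W) (G : SimpleGraph V) : Prop :=
  ∃ (S : Set V) (G' : SimpleGraph S),
    (∀ a b : S, G'.Adj a b → G.Adj a.val b.val) ∧ IsContraction H G'

/-- A tree-decomposition of `G`. -/
structure TreeDecomp {V : Type u} (G : SimpleGraph V) where
  ι : Type u
  T : SimpleGraph ι
  isTree : T.IsTree
  bag : ι → Set V
  mem_bag : ∀ v : V, ∃ t, v ∈ bag t
  edge_bag : ∀ ⦃u v : V⦄, G.Adj u v → ∃ t, u ∈ bag t ∧ v ∈ bag t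
  conn_bag : ∀ v : V, ConnSet T {t | v ∈ bag t}

/-- `G` has treewidth at most `k`. -/
def TwLE {V : Type u} (G : SimpleGraph V) (k : ℕ) : Prop :=
  ∃ D : TreeDecomp G, ∀ t, (D.bag t).ncard ≤ k + 1

/-- The treewidth of `G`. -/
noncomputable def tw {V : Type u} (G : SimpleGraph V) : ℕ :=
  sInf {k | TwLE G k}

/-- Boundary vertices of the `(k × k)`-grid. -/
def Boundary (k : ℕ) (q : Fin k × Fin k) : Prop :=
  q.1.val = 0 ∨ q.1.val = k - 1 ∨ q.2.val = 0 ∨ q.2.val = k - 1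

/-- The base relation of the uniformly triangulated grid `Γ_k`: grid edges,
diagonal edges, and edges from the corner `(k-1,k-1)` to all boundary vertices. -/
def triGridRel (k : ℕ) (p q : Fin k × Fin k) : Prop :=
  (p.1 = q.1 ∧ p.2.val + 1 = q.2.val) ∨
  (p.2 = q.2 ∧ p.1.val + 1 = q.1.val) ∨
  (p.1.val = q.1.val + 1 ∧ q.2.val = p.2.val + 1) ∨
  (p.1.val = k - 1 ∧ p.2.val = k - 1 ∧ Boundary k q)

/-- The uniformly triangulated grid `Γ_k`. -/
def triGrid (k : ℕ) : SimpleGraph (Fin k × Fin k) :=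
  SimpleGraph.fromRel (triGridRel k)

/-- `bcg G` is the maximum `k` such that `Γ_k` is a contraction of `G`. -/
noncomputable def bcg {V : Type u} (G : SimpleGraph V) : ℕ :=
  sSup {k | IsContraction (triGrid k) G}

/-- The graph obtained from `G` by dissolving the degree-2 vertex `v` with
neighbors `x` and `y`. -/
def dissolve {V : Type u} (G : SimpleGraph V) (v x y : V) :
    SimpleGraph {u : V // u ≠ v} :=
  SimpleGraph.fromRel (fun a b => G.Adj a.val b.val ∨ (a.val = x ∧ b.val = y))

/-- Bundled finite simple graphs. -/
structure BGraph : Type 1 where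
  V : Type
  [fintypeV : Fintype V]
  G : SimpleGraph V

attribute [instance] BGraph.fintypeV

/-- `B` is obtained from `A` by dissolving one degree-2 vertex. -/
def DissolveStep (A B : BGraph) : Prop :=
  ∃ (v x y : A.V), x ≠ y ∧ A.G.neighborSet v = {x, y} ∧
    Nonempty (B.G ≃g dissolve A.G v x y)

/-- `B` is a dissolution of `A` (a finite sequence of dissolutions of degree-2 vertices). -/
def IsDissolution (A B : BGraph) : Prop :=
  Relation.ReflTransGen DissolveStep A B


lemma connSet_preimage_iso {V V' : Type*} {G : SimpleGraph V} {G' : SimpleGraph V'}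
    (e : G ≃g G') (T : Set V') : ConnSet G (⇑e ⁻¹' T) ↔ ConnSet G' T := by
  have iso : G.induce (⇑e ⁻¹' T) ≃g G'.induce T :=
    { toEquiv := e.toEquiv.subtypeEquiv (fun a => Iff.rfl)
      map_rel_iff' := fun {a b} => e.map_adj_iff }
  exact iso.connected_iff

section DissolveAux

variable {V : Type u} {G : SimpleGraph V} {v x y : V}

lemma dissolve_adj {a b : {u : V // u ≠ v}} (h : G.Adj a.val b.val) :
    (dissolve G v x y).Adj a b := by
  refine ⟨fun he => h.ne (congrArg Subtype.val he), Or.inl (Or.inl h)⟩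

lemma dissolve_adj_xy {a b : {u : V // u ≠ v}} (hxy : x ≠ y) (ha : a.val = x) (hb : b.val = y) :
    (dissolve G v x y).Adj a b := by
  refine ⟨fun he => hxy (ha ▸ hb ▸ congrArg Subtype.val he), Or.inl (Or.inr ⟨ha, hb⟩)⟩

lemma connSet_dissolve (hN : G.neighborSet v = {x, y}) (hxy : x ≠ y) {S : Set V}
    (hS : ConnSet G S) (hne : ∃ u ∈ S, u ≠ v) :
    ConnSet (dissolve G v x y) (Subtype.val ⁻¹' S) := by
  classical
  have key : ∀ n (a b : ↥S) (hav : a.val ≠ v) (hbv : b.val ≠ v)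
      (w : (G.induce S).Walk a b), w.length ≤ n →
      ((dissolve G v x y).induce (Subtype.val ⁻¹' S)).Reachable
        ⟨⟨a.val, hav⟩, a.prop⟩ ⟨⟨b.val, hbv⟩, b.prop⟩ := by
    intro n
    induction n with
    | zero =>
      intro a b hav hbv w hw
      cases w with
      | nil => exact Reachable.refl _
      | cons h p => simp at hw
    | succ n IH =>
      intro a b hav hbv w hw
      cases w with
      | nil => exact Reachable.refl _
      | @cons _ c _ h p =>
        have hac : G.Adj a.val c.val := h
        by_cases hcv : c.val = v
        · -- walk passes through v; next step exits via x or y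
          cases p with
          | nil => exact absurd hcv hbv
          | @cons _ d _ h2 p2 =>
            have hvd : G.Adj v d.val := by
              have : G.Adj c.val d.val := h2
              rwa [hcv] at this
            have hdv : d.val ≠ v := hvd.ne'
            have hva : G.Adj v a.val := by rw [← hcv]; exact hac.symm
            have had : a.val ∈ ({x, y} : Set V) := by rw [← hN]; exact hva
            have hdd : d.val ∈ ({x, y} : Set V) := by rw [← hN]; exact hvd
            have hlen : p2.length ≤ n := by
              simp only [SimpleGraph.Walk.length_cons] at hw; omega
            by_cases hady : a.val = d.val
            · have : (⟨(⟨a.val, hav⟩ : {u : V // u ≠ v}), a.prop⟩ :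
                  ↥((Subtype.val : {u : V // u ≠ v} → V) ⁻¹' S)) =
                  ⟨(⟨d.val, hdv⟩ : {u : V // u ≠ v}), d.prop⟩ := by
                apply Subtype.ext; apply Subtype.ext; exact hady
              rw [this]
              exact IH d b hdv hbv p2 hlen
            · have hxyc : (a.val = x ∧ d.val = y) ∨ (a.val = y ∧ d.val = x) := by
                simp only [Set.mem_insert_iff, Set.mem_singleton_iff] at had hdd
                rcases had with h1 | h1 <;> rcases hdd with h2 | h2 <;> simp_all
              have step : ((dissolve G v x y).induce (Subtype.val ⁻¹' S)).Adj
                  ⟨⟨a.val, hav⟩, a.prop⟩ ⟨⟨d.val, hdv⟩, d.prop⟩ := by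
                rcases hxyc with ⟨h1, h2⟩ | ⟨h1, h2⟩
                · exact dissolve_adj_xy hxy h1 h2
                · exact (dissolve_adj_xy hxy h2 h1).symm
              exact step.reachable.trans (IH d b hdv hbv p2 hlen)
        · have step : ((dissolve G v x y).induce (Subtype.val ⁻¹' S)).Adj
              ⟨⟨a.val, hav⟩, a.prop⟩ ⟨⟨c.val, hcv⟩, c.prop⟩ := dissolve_adj hac
          have hlen : p.length ≤ n := by
            simpa [Nat.succ_le_succ_iff] using hw
          exact step.reachable.trans (IH c b hcv hbv p hlen)
  obtain ⟨u, huS, huv⟩ := hne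
  rw [ConnSet, connected_iff]
  refine ⟨?_, ⟨⟨⟨u, huv⟩, huS⟩⟩⟩
  · intro a b
    obtain ⟨w⟩ := hS.preconnected ⟨a.val.val, a.prop⟩ ⟨b.val.val, b.prop⟩
    exact key w.length _ _ a.val.prop b.val.prop w le_rfl

lemma connSet_of_dissolve (hvx : G.Adj v x) (hvy : G.Adj v y) {S : Set V}
    (h1 : x ∈ S → y ∈ S → v ∈ S) (h2 : v ∈ S → x ∈ S ∨ y ∈ S)
    (hS : ConnSet (dissolve G v x y) (Subtype.val ⁻¹' S)) : ConnSet G S := by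
  classical
  have key : ∀ (a b : ↥((Subtype.val : {u : V // u ≠ v} → V) ⁻¹' S))
      (w : ((dissolve G v x y).induce (Subtype.val ⁻¹' S)).Walk a b),
      (G.induce S).Reachable ⟨a.val.val, a.prop⟩ ⟨b.val.val, b.prop⟩ := by
    intro a b w
    induction w with
    | nil => exact Reachable.refl _
    | @cons a c b h p IH =>
      have hadj : (dissolve G v x y).Adj a.val c.val := h
      rcases hadj with ⟨hne, hr⟩
      have step : (G.induce S).Reachable ⟨a.val.val, a.prop⟩ ⟨c.val.val, c.prop⟩ := by
        rcases hr with (hG | ⟨hax, hcy⟩) | (hG | ⟨hcx, hay⟩)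
        · exact (Adj.reachable (hG : G.Adj a.val.val c.val.val))
        · -- a = x, c = y : go through v
          have hxS : x ∈ S := hax ▸ a.prop
          have hyS : y ∈ S := hcy ▸ c.prop
          have hvS : v ∈ S := h1 hxS hyS
          have e1 : (G.induce S).Adj ⟨a.val.val, a.prop⟩ ⟨v, hvS⟩ := by
            show G.Adj a.val.val v
            rw [hax]; exact hvx.symm
          have e2 : (G.induce S).Adj ⟨v, hvS⟩ ⟨c.val.val, c.prop⟩ := by
            show G.Adj v c.val.val
            rw [hcy]; exact hvy
          exact e1.reachable.trans e2.reachable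
        · exact (Adj.reachable (hG.symm : G.Adj a.val.val c.val.val))
        · have hxS : x ∈ S := hcx ▸ c.prop
          have hyS : y ∈ S := hay ▸ a.prop
          have hvS : v ∈ S := h1 hxS hyS
          have e1 : (G.induce S).Adj ⟨a.val.val, a.prop⟩ ⟨v, hvS⟩ := by
            show G.Adj a.val.val v
            rw [hay]; exact hvy.symm
          have e2 : (G.induce S).Adj ⟨v, hvS⟩ ⟨c.val.val, c.prop⟩ := by
            show G.Adj v c.val.val
            rw [hcx]; exact hvx
          exact e1.reachable.trans e2.reachable
      exact step.trans IH
  have reach_from : ∀ (a : ↥S), ∃ a₀ : ↥S, a₀.val ≠ v ∧ (G.induce S).Reachable a a₀ := by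
    intro a
    by_cases hav : a.val = v
    · rcases h2 (hav ▸ a.prop) with hxS | hyS
      · refine ⟨⟨x, hxS⟩, hvx.ne', Adj.reachable ?_⟩
        show G.Adj a.val x
        rw [hav]; exact hvx
      · refine ⟨⟨y, hyS⟩, hvy.ne', Adj.reachable ?_⟩
        show G.Adj a.val y
        rw [hav]; exact hvy
    · exact ⟨a, hav, Reachable.refl _⟩
  rw [ConnSet, connected_iff]
  constructor
  · intro a b
    obtain ⟨a₀, ha₀, ra⟩ := reach_from a
    obtain ⟨b₀, hb₀, rb⟩ := reach_from b
    obtain ⟨w⟩ := hS.preconnected ⟨⟨a₀.val, ha₀⟩, a₀.prop⟩ ⟨⟨b₀.val, hb₀⟩, b₀.prop⟩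
    exact (ra.trans (key _ _ w)).trans rb.symm
  · obtain ⟨⟨u, hu⟩⟩ := hS.nonempty
    exact ⟨⟨u.val, hu⟩⟩

lemma fiber_meets {VQ : Type*} {Q : SimpleGraph VQ} {σ : V → VQ}
    (hN : G.neighborSet v = {x, y}) (hσ : IsContractionMap G Q σ)
    (hQ : ∀ w : VQ, 3 ≤ (Q.neighborSet w).ncard) :
    σ x = σ v ∨ σ y = σ v := by
  classical
  by_contra hcon
  push_neg at hcon
  obtain ⟨hx, hy⟩ := hcon
  -- the fiber of σ v is exactly {v}
  have hFib : σ ⁻¹' {σ v} = {v} := by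
    apply Set.eq_singleton_iff_unique_mem.mpr
    refine ⟨rfl, ?_⟩
    intro w hw
    by_contra hwv
    obtain ⟨p⟩ := (hσ.2.1 (σ v)).preconnected ⟨v, rfl⟩ ⟨w, hw⟩
    cases p with
    | nil => exact absurd rfl hwv
    | @cons _ c _ h p =>
      have hvc : G.Adj v c.val := h
      have : c.val ∈ ({x, y} : Set V) := by rw [← hN]; exact hvc
      rcases this with hcx | hcy
      · exact hx (hcx ▸ c.prop)
      · exact hy (hcy ▸ c.prop)
  -- so σ v has at most 2 neighbors in Q
  have hsub : Q.neighborSet (σ v) ⊆ {σ x, σ y} := by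
    intro q hq
    have hadj : Q.Adj (σ v) q := hq
    have hqr : (σ v) ≠ q := hadj.ne
    have hconn := (hσ.2.2 (σ v) q hqr).mp hadj
    obtain ⟨⟨u, hu⟩⟩ := (hσ.2.1 q).nonempty
    have huv : u ≠ v := by
      intro he
      apply hqr
      rw [← he]
      exact hu
    obtain ⟨p⟩ := hconn.preconnected ⟨v, Or.inl rfl⟩ ⟨u, Or.inr hu⟩
    cases p with
    | nil => exact absurd rfl huv
    | @cons _ c _ h p =>
      have hvc : G.Adj v c.val := h
      have hcv : c.val ≠ v := hvc.ne'
      have hcq : σ c.val = q := by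
        rcases c.prop with hcr | hcq
        · exact absurd (hFib ▸ hcr : c.val ∈ ({v} : Set V)) hcv
        · exact hcq
      have : c.val ∈ ({x, y} : Set V) := by rw [← hN]; exact hvc
      rcases this with hcx | hcy
      · exact Or.inl (hcx ▸ hcq).symm
      · exact Or.inr (hcy ▸ hcq).symm
  have h2 : (Q.neighborSet (σ v)).ncard ≤ 2 := by
    have := Set.ncard_le_ncard hsub ((Set.finite_singleton (σ y)).insert (σ x))
    calc (Q.neighborSet (σ v)).ncard ≤ ({σ x, σ y} : Set VQ).ncard := this
      _ ≤ 2 := Set.ncard_insert_le _ _ |>.trans (by simp)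
  exact absurd (hQ (σ v)) (by omega)

lemma isContraction_of_iso {V V' : Type*} {G : SimpleGraph V} {G' : SimpleGraph V'}
    {VQ : Type*} {Q : SimpleGraph VQ} (e : G ≃g G') (h : IsContraction Q G') :
    IsContraction Q G := by
  obtain ⟨σ, hsurj, hfib, hadj⟩ := h
  refine ⟨σ ∘ ⇑e, hsurj.comp e.surjective, ?_, ?_⟩
  · intro w
    have hpre : (σ ∘ ⇑e) ⁻¹' {w} = ⇑e ⁻¹' (σ ⁻¹' {w}) := rfl
    rw [hpre, connSet_preimage_iso e]
    exact hfib w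
  · intro p q hpq
    rw [hadj p q hpq]
    have hpre : (σ ∘ ⇑e) ⁻¹' {p} ∪ (σ ∘ ⇑e) ⁻¹' {q} = ⇑e ⁻¹' (σ ⁻¹' {p} ∪ σ ⁻¹' {q}) := by
      rw [← Set.preimage_union]; rfl
    rw [hpre, connSet_preimage_iso e]

lemma dissolve_step_contraction {VQ : Type} (Q : SimpleGraph VQ)
    (hQ : ∀ w : VQ, 3 ≤ (Q.neighborSet w).ncard)
    {A B : BGraph} (hs : DissolveStep A B)
    (h : IsContraction Q A.G) : IsContraction Q B.G := by
  obtain ⟨v, x, y, hxy, hN, ⟨e⟩⟩ := hs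
  obtain ⟨σ, hσ⟩ := h
  apply isContraction_of_iso e
  have hvx : A.G.Adj v x := by
    rw [← SimpleGraph.mem_neighborSet, hN]; exact Or.inl rfl
  have hvy : A.G.Adj v y := by
    rw [← SimpleGraph.mem_neighborSet, hN]; exact Or.inr rfl
  have hkey := fiber_meets hN hσ hQ
  obtain ⟨hsurj, hfib, hadj⟩ := hσ
  have fib_ne : ∀ w : VQ, ∃ u, u ≠ v ∧ σ u = w := by
    intro w
    by_cases hw : σ v = w
    · rcases hkey with hk | hk
      · exact ⟨x, hvx.ne', hk.trans hw⟩
      · exact ⟨y, hvy.ne', hk.trans hw⟩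
    · obtain ⟨⟨u, hu⟩⟩ := (hfib w).nonempty
      exact ⟨u, fun he => hw (he ▸ hu), hu⟩
  refine ⟨fun u => σ u.val, ?_, ?_, ?_⟩
  · intro w
    obtain ⟨u, huv, hu⟩ := fib_ne w
    exact ⟨⟨u, huv⟩, hu⟩
  · intro w
    have hpre : (fun u : {u : A.V // u ≠ v} => σ u.val) ⁻¹' {w}
        = Subtype.val ⁻¹' (σ ⁻¹' {w}) := rfl
    rw [hpre]
    obtain ⟨u, huv, hu⟩ := fib_ne w
    exact connSet_dissolve hN hxy (hfib w) ⟨u, hu, huv⟩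
  · intro p q hpq
    rw [hadj p q hpq]
    have hpre : (fun u : {u : A.V // u ≠ v} => σ u.val) ⁻¹' {p}
        ∪ (fun u : {u : A.V // u ≠ v} => σ u.val) ⁻¹' {q}
        = Subtype.val ⁻¹' (σ ⁻¹' {p} ∪ σ ⁻¹' {q}) := by
      rw [← Set.preimage_union]; rfl
    rw [hpre]
    constructor
    · intro hc
      obtain ⟨u, huv, hu⟩ := fib_ne p
      exact connSet_dissolve hN hxy hc ⟨u, Or.inl hu, huv⟩
    · intro hc
      refine connSet_of_dissolve hvx hvy ?_ ?_ hc
      · intro hxS hyS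
        have hxS' : σ x = p ∨ σ x = q := hxS
        have hyS' : σ y = p ∨ σ y = q := hyS
        show σ v = p ∨ σ v = q
        rcases hkey with hk | hk
        · rwa [hk] at hxS'
        · rwa [hk] at hyS'
      · intro hvS
        have hvS' : σ v = p ∨ σ v = q := hvS
        rcases hkey with hk | hk
        · exact Or.inl (show σ x = p ∨ σ x = q by rw [hk]; exact hvS')
        · exact Or.inr (show σ y = p ∨ σ y = q by rw [hk]; exact hvS')

end DissolveAux

/-- If every vertex of `Q` has degree at least 3 and `B` is a dissolution
of `A`, then `Q` a contraction of `A` implies `Q` a contraction of `B`. -/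
theorem stmt_4 {VQ : Type} (Q : SimpleGraph VQ)
    (hQ : ∀ w : VQ, 3 ≤ (Q.neighborSet w).ncard)
    (A B : BGraph) (hd : IsDissolution A B)
    (h : IsContraction Q A.G) :
    IsContraction Q B.G := by
  induction hd with
  | refl => exact h
  | tail _ hstep ih => exact dissolve_step_contraction Q hQ hstep ih
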